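/- Every locally injective endomorphism of a connected finite graph is an automorphism. -/

import Mathlib

open SimpleGraph

/-- Every locally injective endomorphism of a connected finite graph is an automorphism. -/
theorem stmt3 {V : Type*} [Fintype V] (G : SimpleGraph V) (hc : G.Connected)
    (φ : G →g G)
    (hli : ∀ u v w : V, u ≠ v → G.Adj u w → G.Adj v w → φ u ≠ φ v) :
    ∃ ψ : G ≃g G, ∀ v, ψ v = φ v := by
  classical
  set f := (⇑φ) with hf
  -- iterates are homomorphisms
  have hhom : ∀ (n : ℕ) (u v : V), G.Adj u v → G.Adj (f^[n] u) (f^[n] v) := by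
    intro n
    induction n with
    | zero => simp
    | succ n ih =>
      intro u v h
      simpa [Function.iterate_succ_apply'] using φ.map_adj (ih u v h)
  -- iterates are locally injective
  have hlin : ∀ (n : ℕ) (u v w : V), u ≠ v → G.Adj u w → G.Adj v w →
      f^[n] u ≠ f^[n] v := by
    intro n
    induction n with
    | zero => intro u v w h _ _; simpa using h
    | succ n ih =>
      intro u v w h h1 h2
      have := hli (f^[n] u) (f^[n] v) (f^[n] w) (ih u v w h h1 h2)
        (hhom n _ _ h1) (hhom n _ _ h2)
      simpa [Function.iterate_succ_apply'] using this
  -- pigeonhole: two iterates coincide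
  obtain ⟨m, n, hne, he⟩ := Finite.exists_ne_map_eq_of_infinite (fun n : ℕ => f^[n])
  wlog hmn : m < n generalizing m n
  · exact this n m (Ne.symm hne) he.symm (by omega)
  set d := n - m with hd
  have hd0 : 0 < d := by omega
  have key : ∀ s, m ≤ s → f^[s + d] = f^[s] := by
    intro s hs
    have h1 : s + d = (s - m) + n := by omega
    have h2 : s = (s - m) + m := by omega
    calc f^[s + d] = f^[s - m] ∘ f^[n] := by rw [h1, Function.iterate_add]
      _ = f^[s - m] ∘ f^[m] := by rw [← he]
      _ = f^[s] := by rw [← Function.iterate_add, ← h2]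
  have keyj : ∀ (j s : ℕ), m ≤ s → f^[s + j * d] = f^[s] := by
    intro j
    induction j with
    | zero => simp
    | succ j ih =>
      intro s hs
      have : s + (j + 1) * d = (s + d) + j * d := by ring
      rw [this, ih (s + d) (by omega), key s hs]
  set t := (m + 1) * d with ht
  have ht1 : 1 ≤ t := by rw [ht]; exact Nat.mul_pos (by omega) hd0
  have htm : m ≤ t := by rw [ht]; nlinarith
  have hidem : ∀ x, f^[t] (f^[t] x) = f^[t] x := by
    intro x
    have : f^[t + (m + 1) * d] = f^[t] := keyj (m + 1) t htm
    calc f^[t] (f^[t] x) = f^[t + t] x := by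
            rw [Function.iterate_add_apply]
      _ = f^[t + (m + 1) * d] x := by rw [← ht]
      _ = f^[t] x := by rw [this]
  -- all vertices are fixed by f^[t]
  have step : ∀ u v : V, f^[t] u = u → G.Adj u v → f^[t] v = v := by
    intro u v hu huv
    by_contra h
    have h1 : G.Adj (f^[t] v) u := by
      have := hhom t v u huv.symm
      rwa [hu] at this
    have h2 := hlin t v (f^[t] v) u (fun hh => h hh.symm) huv.symm h1
    exact h2 (hidem v).symm
  have hfix : ∀ v, f^[t] v = v := by
    obtain ⟨a⟩ := hc.nonempty
    have walkfix : ∀ {x y : V}, G.Walk x y → f^[t] x = x → f^[t] y = y := by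
      intro x y p
      induction p with
      | nil => exact id
      | cons h p ih => intro hx; exact ih (step _ _ hx h)
    intro v
    obtain ⟨p⟩ := hc.preconnected (f^[t] a) v
    exact walkfix p (hidem a)
  obtain ⟨s, hs⟩ : ∃ s, t = s + 1 := ⟨t - 1, by omega⟩
  have hfix' : ∀ v, f^[s + 1] v = v := by rw [← hs]; exact hfix
  have hinj : Function.Injective f := by
    intro u v h
    have : f^[s] (f u) = f^[s] (f v) := by rw [h]
    rwa [← Function.iterate_succ_apply, ← Function.iterate_succ_apply,
      hfix' u, hfix' v] at this
  have hsurj : Function.Surjective f := by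
    intro v
    refine ⟨f^[s] v, ?_⟩
    have := hfix' v
    rwa [Function.iterate_succ_apply'] at this
  refine ⟨⟨Equiv.ofBijective f ⟨hinj, hsurj⟩, ?_⟩, fun v => rfl⟩
  intro u v
  show G.Adj (f u) (f v) ↔ G.Adj u v
  constructor
  · intro h
    have := hhom s _ _ h
    rwa [← Function.iterate_succ_apply, ← Function.iterate_succ_apply,
      hfix' u, hfix' v] at this
  · exact fun h => φ.map_adj h
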